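/- arXiv:1808.03342 — 2 statements merged into one kernel-verified Lean document; each statement's English description precedes it below -/
import Mathlib

section
/- Let λ > 0 and suppose a continuous function φ on an arc β of length |β| satisfies: (1) |∫_β φ ds| ≤ C₁ λ^{−1/2} (log λ)^{1/4}, (2) ∫_β φ² ds ≥ c₂ > 0, and (3) sup_β |φ| ≤ C₃ λ^{1/2}/(log λ)^{1/2}. Then for λ sufficiently large (depending on C₁, c₂, C₃), φ changes sign on β; in particular ∫_β |φ| ds ≥ c₂ C₃^{−1} λ^{−1/2} (log λ)^{1/2} > |∫_β φ ds|. -/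
/-- Quantitative Jung–Zelditch sign-change argument: if a continuous function
`φ` on an arc `β = [0,L]` has small period integral, `L²`-mass bounded below,
and sup norm `≤ C₃ λ^{1/2}/(log λ)^{1/2}`, then for `λ` large (depending only
on the constants) `φ` changes sign on `β`, and moreover
`∫_β |φ| ≥ (c₂/C₃)·λ^{−1/2}(log λ)^{1/2} > |∫_β φ|`. -/
theorem stmt_5 (C₁ c₂ C₃ : ℝ) (hC₁ : 0 < C₁) (hc₂ : 0 < c₂) (hC₃ : 0 < C₃) :
    ∃ Λ : ℝ, ∀ lam : ℝ, Λ ≤ lam → ∀ (L : ℝ) (φ : ℝ → ℝ), 0 < L →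
      ContinuousOn φ (Set.Icc 0 L) →
      |∫ s in (0:ℝ)..L, φ s| ≤ C₁ * lam ^ (-(1:ℝ)/2) * Real.log lam ^ ((1:ℝ)/4) →
      c₂ ≤ ∫ s in (0:ℝ)..L, (φ s) ^ 2 →
      (∀ s ∈ Set.Icc (0:ℝ) L, |φ s| ≤ C₃ * lam ^ ((1:ℝ)/2) / Real.log lam ^ ((1:ℝ)/2)) →
      (c₂ * C₃⁻¹ * lam ^ (-(1:ℝ)/2) * Real.log lam ^ ((1:ℝ)/2)
          ≤ ∫ s in (0:ℝ)..L, |φ s|) ∧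
      |∫ s in (0:ℝ)..L, φ s|
          < c₂ * C₃⁻¹ * lam ^ (-(1:ℝ)/2) * Real.log lam ^ ((1:ℝ)/2) ∧
      ∃ p ∈ Set.Icc (0:ℝ) L, ∃ q ∈ Set.Icc (0:ℝ) L, 0 < φ p ∧ φ q < 0 := by
  set x : ℝ := C₁ * C₃ / c₂ with hx
  have hx0 : 0 < x := by positivity
  refine ⟨Real.exp (x ^ 4 + 1), fun lam hlam L φ hL hφ hper hmass hsup => ?_⟩
  have hl0 : 0 < lam :=
    lt_of_lt_of_le (Real.exp_pos _) hlam
  have hlog : x ^ 4 + 1 ≤ Real.log lam := by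
    rw [← Real.log_exp (x ^ 4 + 1)]
    exact Real.log_le_log (Real.exp_pos _) hlam
  have hG0 : 0 < Real.log lam := by nlinarith [pow_pos hx0 4]
  have hlog4 : x < Real.log lam ^ ((1:ℝ)/4) := by
    have h1 : x = (x ^ 4) ^ ((1:ℝ)/4) := by
      rw [← Real.rpow_natCast x 4, ← Real.rpow_mul hx0.le]
      norm_num
    rw [h1]
    apply Real.rpow_lt_rpow (by positivity) (by nlinarith) (by norm_num)
  -- abbreviations
  set A : ℝ := lam ^ ((1:ℝ)/2) with hA
  set B : ℝ := Real.log lam ^ ((1:ℝ)/2) with hB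
  set Q : ℝ := Real.log lam ^ ((1:ℝ)/4) with hQ
  have hA0 : 0 < A := Real.rpow_pos_of_pos hl0 _
  have hB0 : 0 < B := Real.rpow_pos_of_pos hG0 _
  have hQ0 : 0 < Q := Real.rpow_pos_of_pos hG0 _
  have hBQ : B = Q * Q := by
    rw [hB, hQ, ← Real.rpow_add hG0]; norm_num
  have hneg : lam ^ (-(1:ℝ)/2) = A⁻¹ := by
    rw [hA, neg_div, Real.rpow_neg hl0.le]
  set M : ℝ := C₃ * A / B with hM
  have hM0 : 0 < M := by positivity
  set T : ℝ := c₂ * C₃⁻¹ * lam ^ (-(1:ℝ)/2) * B with hT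
  have hTM : T * M = c₂ := by
    rw [hT, hM, hneg]; field_simp
  -- integrability
  have huIcc : Set.uIcc (0:ℝ) L = Set.Icc 0 L := Set.uIcc_of_le hL.le
  have hφi : IntervalIntegrable φ MeasureTheory.volume 0 L := by
    apply ContinuousOn.intervalIntegrable; rwa [huIcc]
  have habsi : IntervalIntegrable (fun s => |φ s|) MeasureTheory.volume 0 L := by
    apply ContinuousOn.intervalIntegrable; rw [huIcc]; exact hφ.abs
  have hsqi : IntervalIntegrable (fun s => φ s ^ 2) MeasureTheory.volume 0 L := by
    apply ContinuousOn.intervalIntegrable; rw [huIcc]; exact hφ.pow 2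
  have hmuli : IntervalIntegrable (fun s => M * |φ s|) MeasureTheory.volume 0 L :=
    habsi.const_mul M
  -- Step A : ∫ φ² ≤ M ∫ |φ|
  have hptwise : ∀ s ∈ Set.Icc (0:ℝ) L, φ s ^ 2 ≤ M * |φ s| := by
    intro s hs
    have h1 : |φ s| ≤ M := hsup s hs
    have h2 : φ s ^ 2 = |φ s| * |φ s| := by rw [← sq_abs]; ring
    rw [h2]
    exact mul_le_mul_of_nonneg_right h1 (abs_nonneg _)
  have hstepA : (∫ s in (0:ℝ)..L, φ s ^ 2) ≤ M * ∫ s in (0:ℝ)..L, |φ s| := by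
    have := intervalIntegral.integral_mono_on hL.le hsqi hmuli hptwise
    rwa [intervalIntegral.integral_const_mul] at this
  have hI1 : T ≤ ∫ s in (0:ℝ)..L, |φ s| := by
    have h1 : T * M ≤ (∫ s in (0:ℝ)..L, |φ s|) * M := by
      rw [hTM, mul_comm]; exact le_trans hmass hstepA
    exact le_of_mul_le_mul_right h1 hM0
  -- Step B : |∫ φ| < T
  have hI2 : |∫ s in (0:ℝ)..L, φ s| < T := by
    refine lt_of_le_of_lt hper ?_
    rw [hT, hBQ, hneg]
    have hx' : C₁ < c₂ * C₃⁻¹ * Q := by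
      rw [hx] at hlog4
      calc C₁ = (C₁ * C₃ / c₂) * (c₂ * C₃⁻¹) := by field_simp
        _ < Q * (c₂ * C₃⁻¹) := by
            apply mul_lt_mul_of_pos_right hlog4 (by positivity)
        _ = c₂ * C₃⁻¹ * Q := by ring
    have hAinv : 0 < A⁻¹ := inv_pos.mpr hA0
    nlinarith [mul_pos hAinv hQ0]
  refine ⟨hI1, hI2, ?_⟩
  have hT0 : 0 < T := by rw [hT, hneg]; positivity
  -- sign change
  by_contra hcon
  push_neg at hcon
  have key : (∀ s ∈ Set.Icc (0:ℝ) L, φ s ≤ 0) ∨ (∀ s ∈ Set.Icc (0:ℝ) L, 0 ≤ φ s) := by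
    by_cases hp : ∃ p ∈ Set.Icc (0:ℝ) L, 0 < φ p
    · obtain ⟨p, hpmem, hp0⟩ := hp
      exact Or.inr fun q hq => hcon p hpmem q hq hp0
    · push_neg at hp
      exact Or.inl hp
  have heq : (∫ s in (0:ℝ)..L, |φ s|) ≤ |∫ s in (0:ℝ)..L, φ s| := by
    rcases key with h | h
    · have h2 : Set.EqOn (fun s => |φ s|) (fun s => -φ s) (Set.uIcc (0:ℝ) L) := by
        intro s hs
        simp only
        rw [abs_of_nonpos (h s (huIcc ▸ hs))]
      rw [intervalIntegral.integral_congr h2, intervalIntegral.integral_neg]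
      exact neg_le_abs _
    · have h2 : Set.EqOn (fun s => |φ s|) φ (Set.uIcc (0:ℝ) L) := by
        intro s hs
        simp only
        rw [abs_of_nonneg (h s (huIcc ▸ hs))]
      rw [intervalIntegral.integral_congr h2]
      exact le_abs_self _
  exact absurd (lt_of_le_of_lt (le_trans hI1 heq) hI2) (lt_irrefl _)
end

section
/- Let f: ℂ ⊇ D → ℂ be holomorphic and not identically zero on the unit disc, with f extending continuously to the closed disc, and suppose sup_{|z|≤1} |f(z)| ≤ 2^N · sup_{|z| ≤ 1/2} |f(z)|. Then the number of zeros of f in the disc of radius 1/2, counted with multiplicity, is at most C₀·N for an absolute constant C₀. -/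
open Metric Set Function

/-- Vanishing order of `f` at `z`: the least `k` with nonzero `k`-th
derivative. -/
noncomputable def vanishingOrder (f : ℂ → ℂ) (z : ℂ) : ℕ :=
  sInf {k : ℕ | iteratedDeriv k f z ≠ 0}

lemma blaschke_bound {z w : ℂ} (hz : ‖z‖ ≤ 1/2) (hw : ‖w‖ ≤ 1/2) :
    5 * ‖z - w‖ ≤ 4 * ‖1 - (starRingEnd ℂ) w * z‖ := by
  have key : Complex.normSq (1 - (starRingEnd ℂ) w * z) - Complex.normSq (z - w)
      = (1 - Complex.normSq z) * (1 - Complex.normSq w) := by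
    simp only [Complex.normSq_apply, Complex.sub_re, Complex.sub_im, Complex.one_re,
      Complex.one_im, Complex.mul_re, Complex.mul_im, Complex.conj_re, Complex.conj_im]
    ring
  have h1 : ‖(1:ℂ) - (starRingEnd ℂ) w * z‖ ≤ 5/4 := by
    calc ‖(1:ℂ) - (starRingEnd ℂ) w * z‖ ≤ ‖(1:ℂ)‖ + ‖(starRingEnd ℂ) w * z‖ := norm_sub_le _ _
    _ ≤ 1 + (1/2) * (1/2) := by
        rw [norm_one, norm_mul, RCLike.norm_conj]
        have := norm_nonneg z
        gcongr
    _ ≤ 5/4 := by norm_num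
  have e1 : Complex.normSq (z - w) = ‖z - w‖^2 := by rw [Complex.normSq_eq_norm_sq]
  have e2 : Complex.normSq (1 - (starRingEnd ℂ) w * z) = ‖1 - (starRingEnd ℂ) w * z‖^2 := by
    rw [Complex.normSq_eq_norm_sq]
  have e3 : Complex.normSq z = ‖z‖^2 := by rw [Complex.normSq_eq_norm_sq]
  have e4 : Complex.normSq w = ‖w‖^2 := by rw [Complex.normSq_eq_norm_sq]
  rw [e1, e2, e3, e4] at key
  have hz2 : ‖z‖^2 ≤ 1/4 := by nlinarith [norm_nonneg z]
  have hw2 : ‖w‖^2 ≤ 1/4 := by nlinarith [norm_nonneg w]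
  have hprod : (9:ℝ)/16 ≤ (1 - ‖z‖^2) * (1 - ‖w‖^2) := by nlinarith
  nlinarith [norm_nonneg (z - w), norm_nonneg (1 - (starRingEnd ℂ) w * z)]

lemma blaschke_boundary {z w : ℂ} (hz : ‖z‖ = 1) :
    ‖(1:ℂ) - (starRingEnd ℂ) w * z‖ = ‖z - w‖ := by
  have h0 : (starRingEnd ℂ) z * z = 1 := by
    rw [mul_comm, Complex.mul_conj]
    norm_cast
    simp [Complex.normSq_eq_norm_sq, hz]
  have h : (starRingEnd ℂ) ((1:ℂ) - (starRingEnd ℂ) w * z) = (starRingEnd ℂ) z * (z - w) := by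
    rw [map_sub, map_one, map_mul, Complex.conj_conj, mul_sub, h0]
    ring
  calc ‖(1:ℂ) - (starRingEnd ℂ) w * z‖
      = ‖(starRingEnd ℂ) ((1:ℂ) - (starRingEnd ℂ) w * z)‖ := (RCLike.norm_conj _).symm
  _ = ‖(starRingEnd ℂ) z‖ * ‖z - w‖ := by rw [h, norm_mul]
  _ = ‖z - w‖ := by rw [RCLike.norm_conj, hz, one_mul]

lemma norm_le_csSup_image {f : ℂ → ℂ} {s : Set ℂ} (hs : IsCompact s)
    (hc : ContinuousOn f s) {z : ℂ} (hz : z ∈ s) :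
    ‖f z‖ ≤ sSup ((fun z => ‖f z‖) '' s) := by
  apply le_csSup ((hs.image_of_continuousOn hc.norm).bddAbove)
  exact mem_image_of_mem _ hz

lemma poly_diff (s : Multiset ℂ) :
    Differentiable ℂ (fun x : ℂ => (s.map (fun w => x - w)).prod) := by
  induction s using Multiset.induction_on with
  | empty => simpa using differentiable_const (1:ℂ)
  | cons a s ih =>
    have : (fun x : ℂ => ((a ::ₘ s).map (fun w => x - w)).prod)
        = fun x => (x - a) * (s.map (fun w => x - w)).prod := by
      funext x; rw [Multiset.map_cons, Multiset.prod_cons]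
    rw [this]
    exact (differentiable_id.sub_const a).mul ih

lemma key_lemma (s : Multiset ℂ) : ∀ g : ℂ → ℂ, DifferentiableOn ℂ g (ball (0:ℂ) 1) →
    ContinuousOn g (closedBall (0:ℂ) 1) → (∀ w ∈ s, w ∈ closedBall (0:ℂ) (1/2)) →
    ∀ f : ℂ → ℂ, (∀ x, f x = (s.map (fun w => x - w)).prod * g x) →
    ∀ z ∈ closedBall (0:ℂ) (1/2),
      ‖f z‖ ≤ (4/5)^(Multiset.card s) * sSup ((fun z => ‖f z‖) '' closedBall (0:ℂ) 1) := by
  induction s using Multiset.induction_on with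
  | empty =>
    intro g hgd hgc _ f hf z hz
    simp only [Multiset.card_zero, pow_zero, one_mul]
    exact norm_le_csSup_image (isCompact_closedBall 0 1)
      (hgc.congr (fun x _ => by simpa using hf x))
      (closedBall_subset_closedBall (by norm_num) hz)
  | cons a s ih =>
    intro g hgd hgc hmem f hf z hz
    have ha : ‖a‖ ≤ 1/2 := mem_closedBall_zero_iff.1 (hmem a (Multiset.mem_cons_self a s))
    set A := sSup ((fun z => ‖f z‖) '' closedBall (0:ℂ) 1) with hA
    set f₁ : ℂ → ℂ := fun x => (s.map (fun w => x - w)).prod * g x with hf₁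
    have hf' : ∀ x, f x = (x - a) * f₁ x := by
      intro x
      rw [hf x, Multiset.map_cons, Multiset.prod_cons, mul_assoc]
    set g₂ : ℂ → ℂ := fun x => g x * (1 - (starRingEnd ℂ) a * x) with hg₂
    set f₂ : ℂ → ℂ := fun x => (s.map (fun w => x - w)).prod * g₂ x with hf₂def
    have hf₂eq : ∀ x, f₂ x = f₁ x * (1 - (starRingEnd ℂ) a * x) := fun x => by
      simp only [hf₂def, hg₂, hf₁]; ring
    have haux : Differentiable ℂ (fun x : ℂ => 1 - (starRingEnd ℂ) a * x) :=
      (differentiable_const _).sub ((differentiable_const _).mul differentiable_id)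
    have hg₂d : DifferentiableOn ℂ g₂ (ball (0:ℂ) 1) := hgd.mul haux.differentiableOn
    have hg₂c : ContinuousOn g₂ (closedBall (0:ℂ) 1) :=
      hgc.mul haux.continuous.continuousOn
    have hf₂d : DifferentiableOn ℂ f₂ (ball (0:ℂ) 1) :=
      ((poly_diff s).differentiableOn).mul hg₂d
    have hf₂c : ContinuousOn f₂ (closedBall (0:ℂ) 1) :=
      ((poly_diff s).continuous.continuousOn).mul hg₂c
    have hfc : ContinuousOn f (closedBall (0:ℂ) 1) := by
      refine ContinuousOn.congr ?_ (fun x _ => hf x)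
      exact ((poly_diff (a ::ₘ s)).continuous.continuousOn).mul hgc
    have hbdd : ∀ x ∈ closedBall (0:ℂ) 1, ‖f₂ x‖ ≤ A := by
      intro x hx
      have hcl : closure (ball (0:ℂ) 1) = closedBall (0:ℂ) 1 := closure_ball 0 one_ne_zero
      refine Complex.norm_le_of_forall_mem_frontier_norm_le isBounded_ball
        ⟨hf₂d, by rw [hcl]; exact hf₂c⟩ ?_ (by rw [hcl]; exact hx)
      intro w hw
      rw [frontier_ball 0 one_ne_zero] at hw
      have hw1 : ‖w‖ = 1 := mem_sphere_zero_iff_norm.1 hw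
      have e1 : ‖f₂ w‖ = ‖f₁ w‖ * ‖1 - (starRingEnd ℂ) a * w‖ := by rw [hf₂eq w, norm_mul]
      have e2 : ‖f w‖ = ‖w - a‖ * ‖f₁ w‖ := by rw [hf' w, norm_mul]
      have : ‖f₂ w‖ = ‖f w‖ := by rw [e1, e2, blaschke_boundary hw1]; ring
      rw [this]
      exact norm_le_csSup_image (isCompact_closedBall 0 1) hfc
        (sphere_subset_closedBall hw)
    have hAnn : 0 ≤ A := le_trans (norm_nonneg (f 0))
      (norm_le_csSup_image (isCompact_closedBall 0 1) hfc (mem_closedBall_self zero_le_one))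
    have hsup2 : sSup ((fun z => ‖f₂ z‖) '' closedBall (0:ℂ) 1) ≤ A := by
      apply csSup_le ((nonempty_closedBall.2 zero_le_one).image _)
      rintro b ⟨x, hx, rfl⟩
      exact hbdd x hx
    have hIH := ih g₂ hg₂d hg₂c (fun w hw => hmem w (Multiset.mem_cons_of_mem hw)) f₂
      (fun x => rfl) z hz
    have hz2 : ‖z‖ ≤ 1/2 := mem_closedBall_zero_iff.1 hz
    have hstep : 5 * ‖f z‖ ≤ 4 * ‖f₂ z‖ := by
      have e1 : ‖f₂ z‖ = ‖f₁ z‖ * ‖1 - (starRingEnd ℂ) a * z‖ := by rw [hf₂eq z, norm_mul]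
      have e2 : ‖f z‖ = ‖z - a‖ * ‖f₁ z‖ := by rw [hf' z, norm_mul]
      have hb := blaschke_bound hz2 ha
      have h1 : (0:ℝ) ≤ ‖f₁ z‖ := norm_nonneg _
      rw [e1, e2]
      nlinarith [norm_nonneg (z - a), norm_nonneg ((1:ℂ) - (starRingEnd ℂ) a * z)]
    have hpow : (0:ℝ) ≤ (4/5)^(Multiset.card s) := by positivity
    calc ‖f z‖ ≤ (4/5) * ‖f₂ z‖ := by linarith
    _ ≤ (4/5) * ((4/5)^(Multiset.card s) * A) := by
        have h' : ‖f₂ z‖ ≤ (4/5)^(Multiset.card s) * A :=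
          le_trans hIH (mul_le_mul_of_nonneg_left hsup2 hpow)
        linarith
    _ = (4/5)^(Multiset.card (a ::ₘ s)) * A := by
        rw [Multiset.card_cons, pow_succ]; ring

lemma iterate_dslope_factor (z₀ : ℂ) : ∀ (m : ℕ) (f : ℂ → ℂ),
    (∀ k < m, (Function.swap dslope z₀)^[k] f z₀ = 0) →
    ∀ x, f x = (x - z₀)^m * (Function.swap dslope z₀)^[m] f x := by
  intro m
  induction m with
  | zero => intro f _ x; simp
  | succ m ih =>
    intro f hv x
    have hf0 : f z₀ = 0 := hv 0 (Nat.succ_pos m)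
    have step : f x = (x - z₀) * dslope f z₀ x := by
      have := sub_smul_dslope f z₀ x
      rw [hf0, sub_zero] at this
      rw [← this]; simp [smul_eq_mul]
    have hv' : ∀ k < m, (Function.swap dslope z₀)^[k] (dslope f z₀) z₀ = 0 := by
      intro k hk
      have := hv (k+1) (by omega)
      rwa [Function.iterate_succ_apply] at this
    rw [step, ih (dslope f z₀) hv' x, Function.iterate_succ_apply]
    unfold Function.swap
    ring

lemma dslope_diffOn {f : ℂ → ℂ} {z₀ : ℂ} (hz₀ : z₀ ∈ ball (0:ℂ) 1)
    (hd : DifferentiableOn ℂ f (ball (0:ℂ) 1)) :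
    DifferentiableOn ℂ (dslope f z₀) (ball (0:ℂ) 1) := by
  intro x hx
  rcases eq_or_ne x z₀ with rfl | hne
  · obtain ⟨p, hp⟩ := (hd.analyticOnNhd isOpen_ball) x hx
    exact (hp.has_fpower_series_dslope_fslope.analyticAt).differentiableAt.differentiableWithinAt
  · exact (differentiableWithinAt_dslope_of_ne hne).2 (hd x hx)

lemma dslope_contOn {f : ℂ → ℂ} {z₀ : ℂ} (hz₀ : z₀ ∈ ball (0:ℂ) 1)
    (hd : DifferentiableOn ℂ f (ball (0:ℂ) 1))
    (hc : ContinuousOn f (closedBall (0:ℂ) 1)) :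
    ContinuousOn (dslope f z₀) (closedBall (0:ℂ) 1) := by
  refine (continuousOn_dslope ?_).2 ⟨hc, hd.differentiableAt (isOpen_ball.mem_nhds hz₀)⟩
  exact Filter.mem_of_superset (isOpen_ball.mem_nhds hz₀) ball_subset_closedBall

lemma iterate_dslope_diffOn {z₀ : ℂ} (hz₀ : z₀ ∈ ball (0:ℂ) 1) (m : ℕ) {f : ℂ → ℂ}
    (hd : DifferentiableOn ℂ f (ball (0:ℂ) 1)) :
    DifferentiableOn ℂ ((Function.swap dslope z₀)^[m] f) (ball (0:ℂ) 1) := by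
  induction m generalizing f with
  | zero => simpa
  | succ m ih =>
    rw [Function.iterate_succ_apply]
    exact ih (dslope_diffOn hz₀ hd)

lemma iterate_dslope_contOn {z₀ : ℂ} (hz₀ : z₀ ∈ ball (0:ℂ) 1) (m : ℕ) {f : ℂ → ℂ}
    (hd : DifferentiableOn ℂ f (ball (0:ℂ) 1))
    (hc : ContinuousOn f (closedBall (0:ℂ) 1)) :
    ContinuousOn ((Function.swap dslope z₀)^[m] f) (closedBall (0:ℂ) 1) := by
  induction m generalizing f with
  | zero => simpa
  | succ m ih =>
    rw [Function.iterate_succ_apply]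
    exact ih (dslope_diffOn hz₀ hd) (dslope_contOn hz₀ hd hc)

lemma iteratedDeriv_support_eq {f : ℂ → ℂ} {p : FormalMultilinearSeries ℂ ℂ ℂ} {z : ℂ}
    (hp : HasFPowerSeriesAt f p z) (k : ℕ) :
    iteratedDeriv k f z = (Nat.factorial k : ℂ) * p.coeff k := by
  obtain ⟨r, hr⟩ := hp
  have := hr.factorial_smul (1 : ℂ) k
  rw [iteratedDeriv_eq_iteratedFDeriv]
  rw [← this, nsmul_eq_mul]
  rfl

lemma vanishingOrder_eq_order {f : ℂ → ℂ} {p : FormalMultilinearSeries ℂ ℂ ℂ} {z : ℂ}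
    (hp : HasFPowerSeriesAt f p z) : vanishingOrder f z = p.order := by
  unfold vanishingOrder FormalMultilinearSeries.order
  congr 1
  ext k
  have hfac : (Nat.factorial k : ℂ) ≠ 0 := Nat.cast_ne_zero.2 (Nat.factorial_ne_zero k)
  simp [iteratedDeriv_support_eq hp k, ne_eq, mul_eq_zero, hfac,
    FormalMultilinearSeries.coeff_eq_zero]

lemma analyticAt_order_eq {f : ℂ → ℂ} {p : FormalMultilinearSeries ℂ ℂ ℂ} {z : ℂ}
    (hp : HasFPowerSeriesAt f p z) (hne : p ≠ 0) (hf : AnalyticAt ℂ f z) :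
    analyticOrderAt f z = (p.order : ℕ∞) := by
  rw [AnalyticAt.analyticOrderAt_eq_natCast hf]
  exact ⟨_, ⟨_, hp.has_fpower_series_iterate_dslope_fslope p.order⟩,
    hp.iterate_dslope_fslope_ne_zero hne, Filter.Eventually.of_forall hp.eq_pow_order_mul_iterate_dslope⟩

lemma dslope_vanish {g : ℂ → ℂ} {z : ℂ} (hg : AnalyticAt ℂ g z) {m : ℕ}
    (h : analyticOrderAt g z = (m : ℕ∞)) : ∀ k < m, (Function.swap dslope z)^[k] g z = 0 := by
  obtain ⟨q, hq⟩ := id hg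
  have hqne : q ≠ 0 := by
    rintro rfl
    rw [analyticOrderAt_eq_top.2 (hq.eventually_eq_zero)] at h
    exact (ENat.top_ne_coe m) h
  have hord : q.order = m := by
    have := analyticAt_order_eq hq hqne hg
    rw [h] at this
    exact_mod_cast this.symm
  intro k hk
  have h1 : ((Function.swap dslope z)^[k] g) z
      = (FormalMultilinearSeries.fslope^[k] q).coeff 0 :=
    ((hq.has_fpower_series_iterate_dslope_fslope k).coeff_zero 1).symm
  rw [h1, FormalMultilinearSeries.coeff_iterate_fslope, FormalMultilinearSeries.coeff_eq_zero]
  apply FormalMultilinearSeries.apply_eq_zero_of_lt_order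
  rw [hord]
  simpa using hk

lemma order_of_factor {f g u : ℂ → ℂ} {z : ℂ} (hg : AnalyticAt ℂ g z) (hu : AnalyticAt ℂ u z)
    (hu0 : u z ≠ 0) (heq : ∀ x, f x = u x * g x) (hf : AnalyticAt ℂ f z) {m : ℕ}
    (hford : analyticOrderAt f z = (m : ℕ∞)) : analyticOrderAt g z = (m : ℕ∞) := by
  rw [AnalyticAt.analyticOrderAt_eq_natCast hf] at hford
  rw [AnalyticAt.analyticOrderAt_eq_natCast hg]
  obtain ⟨h, hh, hh0, hhe⟩ := hford
  refine ⟨fun x => h x / u x, hh.div hu hu0, div_ne_zero hh0 hu0, ?_⟩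
  filter_upwards [hhe, hu.continuousAt.eventually_ne hu0] with x hx hux
  have : u x * g x = (x - z) ^ m * h x := by rw [← heq x, hx, smul_eq_mul]
  rw [smul_eq_mul]
  field_simp
  linear_combination this

lemma poly_diff2 (T : Finset ℂ) (m : ℂ → ℕ) :
    Differentiable ℂ (fun x : ℂ => ∏ z ∈ T, (x - z)^(m z)) := by
  classical
  induction T using Finset.induction_on with
  | empty => simpa using differentiable_const (1:ℂ)
  | @insert a T ha ih =>
    have : (fun x : ℂ => ∏ z ∈ insert a T, (x - z)^(m z))
        = fun x => (x - a)^(m a) * ∏ z ∈ T, (x - z)^(m z) := by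
      funext x; rw [Finset.prod_insert ha]
    rw [this]
    exact ((differentiable_id.sub_const a).pow _).mul ih

lemma peel_zeros {f : ℂ → ℂ} (hd : DifferentiableOn ℂ f (ball (0:ℂ) 1))
    (hc : ContinuousOn f (closedBall (0:ℂ) 1))
    (hnz : ∃ z ∈ ball (0:ℂ) 1, f z ≠ 0) (T : Finset ℂ) :
    (∀ z ∈ T, z ∈ ball (0:ℂ) 1) →
    ∃ g : ℂ → ℂ, DifferentiableOn ℂ g (ball (0:ℂ) 1) ∧ ContinuousOn g (closedBall (0:ℂ) 1) ∧
      ∀ x, f x = (∏ z ∈ T, (x - z)^(vanishingOrder f z)) * g x := by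
  classical
  induction T using Finset.induction_on with
  | empty => intro _; exact ⟨f, hd, hc, by simp⟩
  | @insert a T ha ih =>
    intro hT
    obtain ⟨g, hgd, hgc, hgeq⟩ := ih (fun z hz => hT z (Finset.mem_insert_of_mem hz))
    have haB : a ∈ ball (0:ℂ) 1 := hT a (Finset.mem_insert_self a T)
    set u : ℂ → ℂ := fun x => ∏ z ∈ T, (x - z)^(vanishingOrder f z) with hu
    have hud : Differentiable ℂ u := poly_diff2 T _
    have hu0 : u a ≠ 0 := by
      apply Finset.prod_ne_zero_iff.2
      intro z hz
      exact pow_ne_zero _ (sub_ne_zero.2 (fun h => ha (h ▸ hz)))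
    have hfan : AnalyticAt ℂ f a := hd.analyticAt (isOpen_ball.mem_nhds haB)
    have hnev : ¬ ∀ᶠ x in nhds a, f x = 0 := by
      intro hev
      obtain ⟨w, hw, hfw⟩ := hnz
      have := (hd.analyticOnNhd isOpen_ball).eqOn_zero_of_preconnected_of_eventuallyEq_zero
        ((convex_ball (0:ℂ) 1).isPreconnected) haB hev hw
      exact hfw (by simpa using this)
    obtain ⟨p, hp⟩ := id hfan
    have hpne : p ≠ 0 := by
      rintro rfl
      exact hnev (HasFPowerSeriesAt.eventually_eq_zero hp)
    have hford : analyticOrderAt f a = (vanishingOrder f a : ℕ∞) := by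
      rw [vanishingOrder_eq_order hp]; exact analyticAt_order_eq hp hpne hfan
    have hgan : AnalyticAt ℂ g a := hgd.analyticAt (isOpen_ball.mem_nhds haB)
    have hgord := order_of_factor hgan (hud.analyticAt a) hu0 hgeq hfan hford
    have hvan := dslope_vanish hgan hgord
    refine ⟨(Function.swap dslope a)^[vanishingOrder f a] g,
      iterate_dslope_diffOn haB _ hgd, iterate_dslope_contOn haB _ hgd hgc, ?_⟩
    intro x
    rw [Finset.prod_insert ha, hgeq x,
      iterate_dslope_factor a (vanishingOrder f a) g hvan x]
    ring

lemma map_sum_replicate (T : Finset ℂ) (m : ℂ → ℕ) (x : ℂ) :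
    ((∑ z ∈ T, Multiset.replicate (m z) z).map (fun w => x - w)).prod
      = ∏ z ∈ T, (x - z)^(m z) := by
  classical
  induction T using Finset.induction_on with
  | empty => simp
  | @insert a T ha ih =>
    rw [Finset.sum_insert ha, Finset.prod_insert ha, Multiset.map_add, Multiset.prod_add, ← ih]
    simp [Multiset.map_replicate, Multiset.prod_replicate]

lemma card_sum_replicate (T : Finset ℂ) (m : ℂ → ℕ) :
    Multiset.card (∑ z ∈ T, Multiset.replicate (m z) z) = ∑ z ∈ T, m z := by
  classical
  induction T using Finset.induction_on with
  | empty => simp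
  | @insert a T ha ih =>
    rw [Finset.sum_insert ha, Finset.sum_insert ha, Multiset.card_add,
      Multiset.card_replicate, ih]

/-- Lin's lemma: a holomorphic function on the unit disc, continuous up to the
boundary, not identically zero, satisfying the doubling bound
`sup_{|z|≤1}|f| ≤ 2^N · sup_{|z|≤1/2}|f|` has at most `C₀·N` zeros (with
multiplicity) in the disc of radius `1/2`, for an absolute constant `C₀`. -/
theorem stmt_15 :
    ∃ C₀ : ℝ, 0 < C₀ ∧
      ∀ (N : ℝ), 0 ≤ N → ∀ f : ℂ → ℂ,
        DifferentiableOn ℂ f (Metric.ball (0 : ℂ) 1) →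
        ContinuousOn f (Metric.closedBall (0 : ℂ) 1) →
        (∃ z ∈ Metric.ball (0 : ℂ) 1, f z ≠ 0) →
        sSup ((fun z => ‖f z‖) '' Metric.closedBall (0 : ℂ) 1) ≤
          2 ^ N * sSup ((fun z => ‖f z‖) '' Metric.closedBall (0 : ℂ) (1/2)) →
        {z ∈ Metric.closedBall (0 : ℂ) (1/2) | f z = 0}.Finite ∧
          ((∑ᶠ z ∈ {z ∈ Metric.closedBall (0 : ℂ) (1/2) | f z = 0},
              vanishingOrder f z : ℕ) : ℝ) ≤ C₀ * N := by
  refine ⟨4, by norm_num, ?_⟩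
  intro N hN f hd hc hnz hdbl
  set Z := {z ∈ Metric.closedBall (0 : ℂ) (1/2) | f z = 0} with hZdef
  have hsub : closedBall (0:ℂ) (1/2) ⊆ ball (0:ℂ) 1 := closedBall_subset_ball (by norm_num)
  have hZclosed : IsClosed Z := by
    have : Z = closedBall (0:ℂ) (1/2) ∩ f ⁻¹' {0} := by
      ext z; simp [hZdef]
    rw [this]
    exact (hc.mono (closedBall_subset_closedBall (by norm_num))).preimage_isClosed_of_isClosed
      Metric.isClosed_closedBall isClosed_singleton
  have hZcpt : IsCompact Z :=
    (isCompact_closedBall (0:ℂ) (1/2)).of_isClosed_subset hZclosed (fun z hz => hz.1)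
  have hnev : ∀ z ∈ ball (0:ℂ) 1, ¬ ∀ᶠ x in nhds z, f x = 0 := by
    intro z hz hev
    obtain ⟨w, hw, hfw⟩ := hnz
    have := (hd.analyticOnNhd isOpen_ball).eqOn_zero_of_preconnected_of_eventuallyEq_zero
      ((convex_ball (0:ℂ) 1).isPreconnected) hz hev hw
    exact hfw (by simpa using this)
  have hne' : ∀ z ∈ Z, ∀ᶠ x in nhdsWithin z {z}ᶜ, f x ≠ 0 := by
    intro z hz
    rcases ((hd.analyticOnNhd isOpen_ball) z (hsub hz.1)).eventually_eq_zero_or_eventually_ne_zero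
      with h | h
    · exact absurd h (hnev z (hsub hz.1))
    · exact h
  have hdisc : DiscreteTopology Z := by
    refine discreteTopology_subtype_iff.2 (fun z hz => ?_)
    rw [Filter.inf_principal_eq_bot]
    filter_upwards [hne' z hz] with x hx
    intro hxZ
    exact hx hxZ.2
  have hfin : Z.Finite := hZcpt.finite (isDiscrete_iff_discreteTopology.2 hdisc)
  refine ⟨hfin, ?_⟩
  classical
  set T := hfin.toFinset with hT
  have hTsub : ∀ z ∈ T, z ∈ ball (0:ℂ) 1 := fun z hz =>
    hsub ((hfin.mem_toFinset.1 hz).1)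
  obtain ⟨g, hgd, hgc, hgeq⟩ := peel_zeros hd hc hnz T hTsub
  set s : Multiset ℂ := ∑ z ∈ T, Multiset.replicate (vanishingOrder f z) z with hs
  have hf_ms : ∀ x, f x = (s.map (fun w => x - w)).prod * g x := fun x => by
    rw [hs, map_sum_replicate]; exact hgeq x
  have hsmem : ∀ w ∈ s, w ∈ closedBall (0:ℂ) (1/2) := by
    intro w hw
    rw [hs] at hw
    obtain ⟨z, hzT, hzw⟩ := Multiset.mem_sum.1 hw
    rw [Multiset.eq_of_mem_replicate hzw]
    exact (hfin.mem_toFinset.1 hzT).1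
  have hkey := key_lemma s g hgd hgc hsmem f hf_ms
  set A := sSup ((fun z => ‖f z‖) '' closedBall (0:ℂ) 1) with hA
  set M := sSup ((fun z => ‖f z‖) '' closedBall (0:ℂ) (1/2)) with hM
  set n := Multiset.card s with hn
  have hMle : M ≤ (4/5)^n * A := by
    apply csSup_le ((nonempty_closedBall.2 (by norm_num)).image _)
    rintro b ⟨x, hx, rfl⟩
    exact hkey x hx
  have hMpos : 0 < M := by
    have hpt : ∃ z ∈ ball (0:ℂ) (1/2), f z ≠ 0 := by
      by_contra h
      push_neg at h
      have hev : ∀ᶠ x in nhds (0:ℂ), f x = 0 := by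
        filter_upwards [isOpen_ball.mem_nhds (mem_ball_self (by norm_num : (0:ℝ) < 1/2))] with x hx
        exact h x hx
      exact hnev 0 (mem_ball_self one_pos) hev
    obtain ⟨w, hw, hfw⟩ := hpt
    have : ‖f w‖ ≤ M :=
      norm_le_csSup_image (isCompact_closedBall (0:ℂ) (1/2))
        (hc.mono (closedBall_subset_closedBall (by norm_num))) (ball_subset_closedBall hw)
    have h0 : 0 < ‖f w‖ := norm_pos_iff.2 hfw
    linarith
  have h2N : (0:ℝ) < 2 ^ N := Real.rpow_pos_of_pos two_pos N
  have hineq : (1:ℝ) ≤ (4/5)^n * 2^N := by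
    have h45 : (0:ℝ) ≤ (4/5:ℝ)^n := by positivity
    have hchain : M ≤ (4/5)^n * (2^N * M) :=
      le_trans hMle (mul_le_mul_of_nonneg_left hdbl h45)
    nlinarith
  have hpow : ((5:ℝ)/4)^n ≤ 2^N := by
    have hmul : ((5:ℝ)/4)^n * ((4:ℝ)/5)^n = 1 := by
      rw [← mul_pow]; norm_num
    have h54 : (0:ℝ) ≤ ((5:ℝ)/4)^n := by positivity
    calc ((5:ℝ)/4)^n = ((5:ℝ)/4)^n * 1 := by ring
    _ ≤ ((5:ℝ)/4)^n * ((4/5)^n * 2^N) := mul_le_mul_of_nonneg_left hineq h54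
    _ = (((5:ℝ)/4)^n * ((4:ℝ)/5)^n) * 2^N := by ring
    _ = 2^N := by rw [hmul, one_mul]
  have hlog : (n:ℝ) * Real.log (5/4) ≤ N * Real.log 2 := by
    have := Real.log_le_log (by positivity) hpow
    rwa [Real.log_pow, Real.log_rpow two_pos] at this
  have hlog54 : 0 < Real.log (5/4) := Real.log_pos (by norm_num)
  have hlog2 : Real.log 2 ≤ 4 * Real.log (5/4) := by
    have h1 : (4:ℝ) * Real.log (5/4) = Real.log ((5/4:ℝ)^(4:ℕ)) := by
      rw [Real.log_pow]; norm_num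
    rw [h1]
    exact Real.log_le_log (by norm_num) (by norm_num)
  have hfinal : (n:ℝ) ≤ 4 * N := by
    nlinarith [mul_le_mul_of_nonneg_left hlog2 hN]
  have hsum : (∑ᶠ z ∈ Z, vanishingOrder f z) = n := by
    rw [finsum_mem_eq_finite_toFinset_sum _ hfin, hn, hs, card_sum_replicate]
  rw [hsum]
  exact hfinal
end
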